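/- Let m ≥ 1, let V be a nonempty open subset of ℝ^m with V ≠ ℝ^m, and let ε > 0. Then there exist a sequence of points (v_i) in V and a sequence of positive reals (t_i) such that: (i) V = ⋃_i B(v_i, t_i); (ii) t_i ≤ ε for all i; (iii) for every α > 0, each point of ℝ^m lies in B(v_i, α·t_i) for only finitely many indices i; and (iv) t_i / dist(v_i, ℝ^m \ V) → 0 as i → ∞. -/

import Mathlib

open Filter Topology

/-- The open upper half-space over a normed space `V`: pairs `(t, v)` with `t > 0`. -/
def upperHalf (V : Type*) [NormedAddCommGroup V] : Set (ℝ × V) := {p | 0 < p.1}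

/-- The conical limit set of `E ⊆ ℝ × V`: points `x` for which there are `C > 0` and a
sequence `(t_n, v_n)` in `E` with `t_n → 0`, `v_n → x` and `‖v_n - x‖ ≤ C * t_n`. -/
def conicalLimitSet {V : Type*} [NormedAddCommGroup V] (E : Set (ℝ × V)) : Set V :=
  {x | ∃ C > 0, ∃ w : ℕ → ℝ × V, (∀ n, w n ∈ E) ∧
    Tendsto (fun n => (w n).1) atTop (𝓝 (0 : ℝ)) ∧
    Tendsto (fun n => (w n).2) atTop (𝓝 x) ∧
    ∀ n, ‖(w n).2 - x‖ ≤ C * (w n).1}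

/-- `X ⊆ V` is a conical limit set if it is the conical limit set of some subset of the
upper half-space. -/
def IsConicalLimitSet {V : Type*} [NormedAddCommGroup V] (X : Set V) : Prop :=
  ∃ E ⊆ upperHalf V, conicalLimitSet E = X

/-- Any `0 < c ≤ 2` lies in a dyadic shell `[2^{-n}, 2^{-n+1}]`. -/
lemma exists_dyadic_shell {c : ℝ} (hc : 0 < c) (hc2 : c ≤ 2) :
    ∃ n : ℕ, (1/2 : ℝ) ^ n ≤ c ∧ c ≤ 2 * (1/2 : ℝ) ^ n := by
  have hex : ∃ n : ℕ, (1/2 : ℝ) ^ n ≤ c := by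
    obtain ⟨n, hn⟩ := exists_pow_lt_of_lt_one hc (by norm_num : (1/2 : ℝ) < 1)
    exact ⟨n, hn.le⟩
  classical
  refine ⟨Nat.find hex, Nat.find_spec hex, ?_⟩
  rcases Nat.eq_zero_or_pos (Nat.find hex) with h0 | hpos
  · rw [h0]; simpa using hc2
  · obtain ⟨k, hk⟩ := Nat.exists_eq_succ_of_ne_zero hpos.ne'
    have := Nat.find_min hex (m := k) (by omega)
    push_neg at this
    rw [hk]
    calc c ≤ (1/2 : ℝ) ^ k := this.le
      _ = 2 * (1/2 : ℝ) ^ (k + 1) := by ring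

/-- Abbreviation for Euclidean space. -/
abbrev Euc (m : ℕ) := EuclideanSpace ℝ (Fin m)

set_option maxHeartbeats 1000000 in
/-- Covering lemma: a nonempty proper open subset `V` of `ℝ^m` can be covered by a
sequence of balls `B(v_i, t_i)` with `v_i ∈ V`, radii at most `ε`, such that for every
`α > 0` each point lies in only finitely many of the dilated balls `B(v_i, α t_i)`, and
`t_i / dist(v_i, ℝ^m \ V) → 0`. -/
theorem exists_good_ball_cover (m : ℕ) (hm : 1 ≤ m)
    (V : Set (EuclideanSpace ℝ (Fin m))) (hV : IsOpen V) (hne : V.Nonempty)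
    (hproper : V ≠ Set.univ) (ε : ℝ) (hε : 0 < ε) :
    ∃ (v : ℕ → EuclideanSpace ℝ (Fin m)) (t : ℕ → ℝ),
      (∀ i, v i ∈ V) ∧
      (∀ i, 0 < t i) ∧
      V = ⋃ i, Metric.ball (v i) (t i) ∧
      (∀ i, t i ≤ ε) ∧
      (∀ α > 0, ∀ x : EuclideanSpace ℝ (Fin m),
        {i : ℕ | x ∈ Metric.ball (v i) (α * t i)}.Finite) ∧
      Tendsto (fun i => t i / Metric.infDist (v i) Vᶜ) atTop (𝓝 (0 : ℝ)) := by
  classical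
  have hWne : (Vᶜ : Set (Euc m)).Nonempty := by
    rw [Set.nonempty_compl]; exact hproper
  have hWclosed : IsClosed (Vᶜ : Set (Euc m)) := hV.isClosed_compl
  set δ : (Euc m) → ℝ := fun y => Metric.infDist y Vᶜ with hδdef
  set g : (Euc m) → ℝ := fun y => min (δ y) 2 with hgdef
  have hδpos : ∀ y ∈ V, 0 < δ y := fun y hy =>
    (hWclosed.notMem_iff_infDist_pos hWne).mp (by simpa using hy)
  have hgpos : ∀ y ∈ V, 0 < g y := fun y hy => lt_min (hδpos y hy) (by norm_num)
  have hgle : ∀ y, g y ≤ δ y := fun y => min_le_left _ _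
  have hgle2 : ∀ y, g y ≤ 2 := fun y => min_le_right _ _
  have hglip : ∀ a b : (Euc m), g a ≤ g b + dist a b := by
    intro a b
    have h1 : δ a ≤ δ b + dist a b := Metric.infDist_le_infDist_add_dist
    calc g a ≤ min (δ b + dist a b) (2 + dist a b) :=
          le_min (le_trans (hgle a) h1)
            (le_trans (hgle2 a) (le_add_of_nonneg_right dist_nonneg))
      _ = g b + dist a b := (min_add_add_right _ _ _)
  have hgcont : Continuous g :=
    (Metric.continuous_infDist_pt (Vᶜ : Set (Euc m))).min continuous_const
  have hgV : ∀ y, 0 < g y → y ∈ V := by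
    intro y hy
    by_contra h
    have h0 : δ y = 0 := Metric.infDist_zero_of_mem (by simpa using h)
    have h1 := hgle y
    rw [h0] at h1
    linarith
  -- radii
  set r : ℕ × ℕ → ℝ := fun p => min ε ((1/2 : ℝ) ^ p.1) / (p.1 + p.2 + 1) with hrdef
  have hrpos : ∀ p, 0 < r p := by
    intro p
    apply div_pos (lt_min hε (by positivity)) (by positivity)
  have hrle : ∀ p, r p ≤ (1/2 : ℝ) ^ p.1 := by
    intro p
    calc r p ≤ min ε ((1/2 : ℝ) ^ p.1) / 1 := by
          apply div_le_div_of_nonneg_left (le_of_lt (lt_min hε (by positivity))) one_pos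
          · push_cast; linarith [Nat.cast_nonneg (α := ℝ) p.1, Nat.cast_nonneg (α := ℝ) p.2]
      _ ≤ (1/2 : ℝ) ^ p.1 := by rw [div_one]; exact min_le_right _ _
  have hrleε : ∀ p, r p ≤ ε := by
    intro p
    calc r p ≤ min ε ((1/2 : ℝ) ^ p.1) / 1 := by
          apply div_le_div_of_nonneg_left (le_of_lt (lt_min hε (by positivity))) one_pos
          · push_cast; linarith [Nat.cast_nonneg (α := ℝ) p.1, Nat.cast_nonneg (α := ℝ) p.2]
      _ ≤ ε := by rw [div_one]; exact min_le_left _ _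
  -- the compact pieces
  set C : ℕ × ℕ → Set (Euc m) := fun p =>
    {y | (1/2 : ℝ) ^ p.1 ≤ g y ∧ g y ≤ 2 * (1/2 : ℝ) ^ p.1 ∧
      (p.2 : ℝ) ≤ ‖y‖ ∧ ‖y‖ ≤ (p.2 : ℝ) + 1} with hCdef
  have hCsubV : ∀ p, C p ⊆ V := by
    intro p y hy
    exact hgV y (lt_of_lt_of_le (by positivity) hy.1)
  have hCcompact : ∀ p, IsCompact (C p) := by
    intro p
    have hclosed : IsClosed (C p) := by
      apply IsClosed.inter (isClosed_le continuous_const hgcont)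
      apply IsClosed.inter (isClosed_le hgcont continuous_const)
      exact IsClosed.inter (isClosed_le continuous_const continuous_norm)
        (isClosed_le continuous_norm continuous_const)
    exact (isCompact_closedBall (0 : (Euc m)) ((p.2 : ℝ) + 1)).of_isClosed_subset hclosed
      (fun y hy => by simpa [Metric.mem_closedBall, dist_zero_right] using hy.2.2.2)
  -- finite ball covers of each piece
  have hsc : ∀ p : ℕ × ℕ, ∃ s ⊆ C p, s.Finite ∧ C p ⊆ ⋃ c ∈ s, Metric.ball c (r p) := by
    intro p
    exact (hCcompact p).elim_finite_subcover_image
      (fun c _ => Metric.isOpen_ball)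
      (fun y hy => Set.mem_iUnion₂.mpr ⟨y, hy, Metric.mem_ball_self (hrpos p)⟩)
  choose s hssub hsfin hscov using hsc
  -- the index set
  set T : Set ((ℕ × ℕ) × (Euc m)) := {q | q.2 ∈ s q.1} with hTdef
  have hTcount : T.Countable := by
    have hsub : T ⊆ ⋃ p : ℕ × ℕ, ({p} : Set (ℕ × ℕ)) ×ˢ s p := by
      intro q hq
      exact Set.mem_iUnion.mpr ⟨q.1, ⟨rfl, hq⟩⟩
    exact Set.Countable.mono hsub
      (Set.countable_iUnion fun p => ((Set.finite_singleton p).prod (hsfin p)).countable)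
  -- every point of V is covered, with shell index controlled by g
  have hcov : ∀ y ∈ V, ∃ q ∈ T, y ∈ Metric.ball q.2 (r q.1) ∧ (1/2 : ℝ) ^ q.1.1 ≤ g y := by
    intro y hy
    obtain ⟨n, hn1, hn2⟩ := exists_dyadic_shell (hgpos y hy) (hgle2 y)
    set k := ⌊‖y‖⌋₊ with hk
    have hyC : y ∈ C (n, k) := by
      refine ⟨hn1, hn2, Nat.floor_le (norm_nonneg y), ?_⟩
      exact (Nat.lt_floor_add_one ‖y‖).le
    obtain ⟨c, hc, hyc⟩ := Set.mem_iUnion₂.mp (hscov (n, k) hyC)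
    exact ⟨((n, k), c), hc, hyc, hn1⟩
  -- T is infinite
  have hTinf : T.Infinite := by
    have hfr : (frontier V).Nonempty := by
      rw [Set.nonempty_iff_ne_empty]
      intro h
      rcases isClopen_iff.mp (isClopen_iff_frontier_eq_empty.mpr h) with h' | h'
      · exact hne.ne_empty h'
      · exact hproper h'
    obtain ⟨z, hz⟩ := hfr
    have hzW : z ∈ (Vᶜ : Set (Euc m)) := by
      have h1 : z ∈ closure (Vᶜ : Set (Euc m)) := by
        rw [frontier_eq_closure_inter_closure] at hz
        exact hz.2
      rwa [hWclosed.closure_eq] at h1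
    have hzcl : z ∈ closure V := by
      rw [frontier_eq_closure_inter_closure] at hz
      exact hz.1
    have key : ∀ n₀ : ℕ, ∃ q ∈ T, n₀ ≤ q.1.1 := by
      intro n₀
      obtain ⟨y, hyV, hyz⟩ := Metric.mem_closure_iff.mp hzcl ((1/2 : ℝ) ^ (n₀ + 1)) (by positivity)
      obtain ⟨q, hqT, _, hq2⟩ := hcov y hyV
      refine ⟨q, hqT, ?_⟩
      have hδy : δ y ≤ dist y z := by
        rw [dist_comm] at hyz
        exact Metric.infDist_le_dist_of_mem hzW
      have hgy : g y < (1/2 : ℝ) ^ (n₀ + 1) := by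
        calc g y ≤ δ y := hgle y
          _ ≤ dist y z := hδy
          _ = dist z y := dist_comm y z
          _ < (1/2 : ℝ) ^ (n₀ + 1) := hyz
      have : (1/2 : ℝ) ^ q.1.1 < (1/2 : ℝ) ^ (n₀ + 1) := lt_of_le_of_lt hq2 hgy
      have := (pow_lt_pow_iff_right_of_lt_one₀ (by norm_num) (by norm_num)).mp this
      omega
    intro hT
    obtain ⟨N, hN⟩ := ((hT.image (fun q => q.1.1)).bddAbove)
    obtain ⟨q, hqT, hq⟩ := key (N + 1)
    have := hN (Set.mem_image_of_mem _ hqT)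
    omega
  -- enumerate T
  have : Countable ↥T := hTcount
  have : Infinite ↥T := hTinf.to_subtype
  obtain ⟨de⟩ := nonempty_denumerable ↥T
  haveI := de
  obtain ⟨e⟩ : Nonempty (ℕ ≃ ↥T) := ⟨(Denumerable.eqv ↥T).symm⟩
  set v : ℕ → (Euc m) := fun i => ((e i : (ℕ × ℕ) × (Euc m))).2 with hvdef
  set t : ℕ → ℝ := fun i => r ((e i : (ℕ × ℕ) × (Euc m))).1 with htdef
  have hmem : ∀ i, (e i : (ℕ × ℕ) × (Euc m)).2 ∈ s (e i : (ℕ × ℕ) × (Euc m)).1 := fun i => (e i).2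
  have hvC : ∀ i, v i ∈ C (e i : (ℕ × ℕ) × (Euc m)).1 := fun i => hssub _ (hmem i)
  have hvV : ∀ i, v i ∈ V := fun i => hCsubV _ (hvC i)
  -- finiteness helper: only finitely many indices have pair in a given finite set
  have hfinidx : ∀ P : Set (ℕ × ℕ), P.Finite →
      {i : ℕ | (e i : (ℕ × ℕ) × (Euc m)).1 ∈ P}.Finite := by
    intro P hP
    have hQ : {q : (ℕ × ℕ) × (Euc m) | q.1 ∈ P ∧ q.2 ∈ s q.1}.Finite := by
      have : {q : (ℕ × ℕ) × (Euc m) | q.1 ∈ P ∧ q.2 ∈ s q.1} ⊆ ⋃ p ∈ P, ({p} : Set (ℕ × ℕ)) ×ˢ s p := by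
        intro q hq
        exact Set.mem_iUnion₂.mpr ⟨q.1, hq.1, ⟨rfl, hq.2⟩⟩
      exact Set.Finite.subset (hP.biUnion fun p _ => (Set.finite_singleton p).prod (hsfin p)) this
    have hinj : Function.Injective (fun i : ℕ => ((e i : (ℕ × ℕ) × (Euc m)))) :=
      Subtype.val_injective.comp e.injective
    have : {i : ℕ | (e i : (ℕ × ℕ) × (Euc m)).1 ∈ P} ⊆
        (fun i : ℕ => ((e i : (ℕ × ℕ) × (Euc m)))) ⁻¹' {q | q.1 ∈ P ∧ q.2 ∈ s q.1} := by
      intro i hi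
      exact ⟨hi, hmem i⟩
    exact Set.Finite.subset (hQ.preimage hinj.injOn) this
  refine ⟨v, t, hvV, fun i => hrpos _, ?_, fun i => hrleε _, ?_, ?_⟩
  · -- V = union of balls
    apply Set.Subset.antisymm
    · intro y hy
      obtain ⟨q, hqT, hyq, _⟩ := hcov y hy
      refine Set.mem_iUnion.mpr ⟨e.symm ⟨q, hqT⟩, ?_⟩
      simp only [hvdef, htdef, Equiv.apply_symm_apply]
      exact hyq
    · apply Set.iUnion_subset
      intro i y hy
      -- ball (v i) (t i) ⊆ V
      have h1 : t i ≤ δ (v i) := by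
        calc t i ≤ (1/2 : ℝ) ^ (e i : (ℕ × ℕ) × (Euc m)).1.1 := hrle _
          _ ≤ g (v i) := (hvC i).1
          _ ≤ δ (v i) := hgle _
      by_contra h
      have : δ (v i) ≤ dist (v i) y := Metric.infDist_le_dist_of_mem (by simpa using h)
      rw [Metric.mem_ball, dist_comm] at hy
      linarith
  · -- finiteness of dilated ball membership
    intro α hα x
    set P : Set (ℕ × ℕ) := {p | ∃ c ∈ s p, dist x c < α * r p} with hPdef
    have hPfin : P.Finite := by
      -- bound on k
      have hk : ∀ p ∈ P, p.2 ≤ ⌈‖x‖ + α * ε⌉₊ := by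
        intro p hp
        obtain ⟨c, hcs, hcd⟩ := hp
        have hcC := hssub p hcs
        have h1 : (p.2 : ℝ) ≤ ‖c‖ := hcC.2.2.1
        have h2 : ‖c‖ ≤ ‖x‖ + dist x c := by
          calc ‖c‖ ≤ ‖x‖ + ‖c - x‖ := by
                have := norm_sub_norm_le c x; linarith
            _ = ‖x‖ + dist x c := by rw [dist_eq_norm, norm_sub_rev]
        have h3 : dist x c < α * ε := lt_of_lt_of_le hcd
          (mul_le_mul_of_nonneg_left (hrleε p) hα.le)
        have : (p.2 : ℝ) ≤ ‖x‖ + α * ε := by linarith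
        calc p.2 ≤ ⌈(p.2 : ℝ)⌉₊ := by simp
          _ ≤ ⌈‖x‖ + α * ε⌉₊ := Nat.ceil_le_ceil this
      -- bound on n
      by_cases hx : x ∈ V
      · obtain ⟨N, hN⟩ := exists_pow_lt_of_lt_one
          (div_pos (hgpos x hx) (by linarith : (0:ℝ) < 2 + α)) (by norm_num : (1/2 : ℝ) < 1)
        have hn : ∀ p ∈ P, p.1 < N := by
          intro p hp
          obtain ⟨c, hcs, hcd⟩ := hp
          have hcC := hssub p hcs
          by_contra h
          push_neg at h
          have hpow : (1/2 : ℝ) ^ p.1 ≤ (1/2 : ℝ) ^ N :=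
            pow_le_pow_of_le_one (by norm_num) (by norm_num) h
          have h1 : g x ≤ g c + dist x c := hglip x c
          have h2 : dist x c < α * (1/2 : ℝ) ^ p.1 :=
            lt_of_lt_of_le hcd (mul_le_mul_of_nonneg_left (hrle p) hα.le)
          have h3 : g x ≤ (2 + α) * (1/2 : ℝ) ^ p.1 := by
            have := hcC.2.1
            nlinarith
          have h4 : (2 + α) * (1/2 : ℝ) ^ p.1 ≤ (2 + α) * (1/2 : ℝ) ^ N :=
            mul_le_mul_of_nonneg_left hpow (by linarith)
          rw [lt_div_iff₀ (by linarith : (0:ℝ) < 2 + α)] at hN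
          nlinarith
        have : P ⊆ {p : ℕ × ℕ | p.1 ≤ N ∧ p.2 ≤ ⌈‖x‖ + α * ε⌉₊} := by
          intro p hp; exact ⟨(hn p hp).le, hk p hp⟩
        apply Set.Finite.subset _ this
        have : {p : ℕ × ℕ | p.1 ≤ N ∧ p.2 ≤ ⌈‖x‖ + α * ε⌉₊} = Set.Iic (N, ⌈‖x‖ + α * ε⌉₊) := by
          ext p; simp [Prod.le_def]
        rw [this]; exact Set.finite_Iic _
      · -- x ∉ V
        have hn : ∀ p ∈ P, (p.1 : ℝ) < α := by
          intro p hp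
          obtain ⟨c, hcs, hcd⟩ := hp
          have hcC := hssub p hcs
          have hδc : (1/2 : ℝ) ^ p.1 ≤ δ c := le_trans hcC.1 (hgle c)
          have h1 : δ c ≤ dist c x := Metric.infDist_le_dist_of_mem (by simpa using hx)
          have h2 : dist c x < α * ((1/2 : ℝ) ^ p.1 / (p.1 + p.2 + 1)) := by
            rw [dist_comm]
            refine lt_of_lt_of_le hcd (mul_le_mul_of_nonneg_left ?_ hα.le)
            apply div_le_div_of_nonneg_right (min_le_right _ _) (by positivity)
          have hden : (1 : ℝ) ≤ (p.1 : ℝ) + p.2 + 1 := by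
            push_cast; linarith [Nat.cast_nonneg (α := ℝ) p.1, Nat.cast_nonneg (α := ℝ) p.2]
          have hpow : (0:ℝ) < (1/2 : ℝ) ^ p.1 := by positivity
          have h3 : (1/2 : ℝ) ^ p.1 < α * ((1/2 : ℝ) ^ p.1 / (p.1 + p.2 + 1)) := by linarith
          rw [mul_div_assoc'] at h3
          rw [lt_div_iff₀ (by linarith)] at h3
          nlinarith [Nat.cast_nonneg (α := ℝ) p.2]
        have : P ⊆ {p : ℕ × ℕ | p.1 ≤ ⌈α⌉₊ ∧ p.2 ≤ ⌈‖x‖ + α * ε⌉₊} := by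
          intro p hp
          exact ⟨(Nat.lt_ceil.mpr (hn p hp)).le, hk p hp⟩
        apply Set.Finite.subset _ this
        have : {p : ℕ × ℕ | p.1 ≤ ⌈α⌉₊ ∧ p.2 ≤ ⌈‖x‖ + α * ε⌉₊} =
            Set.Iic (⌈α⌉₊, ⌈‖x‖ + α * ε⌉₊) := by
          ext p; simp [Prod.le_def]
        rw [this]; exact Set.finite_Iic _
    apply Set.Finite.subset (hfinidx P hPfin)
    intro i hi
    simp only [Set.mem_setOf_eq] at hi ⊢
    rw [Metric.mem_ball] at hi
    exact ⟨v i, hmem i, hi⟩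
  · -- t i / δ (v i) → 0
    have hf : Tendsto (fun i => ((e i : (ℕ × ℕ) × (Euc m)).1.1 + (e i : (ℕ × ℕ) × (Euc m)).1.2 : ℕ))
        atTop atTop := by
      rw [← Nat.cofinite_eq_atTop, tendsto_def]
      intro U hU
      rw [mem_cofinite] at hU ⊢
      obtain ⟨b, hb⟩ : ∃ b : ℕ, ∀ n ∉ U, n < b := by
        obtain ⟨b, hb⟩ := hU.bddAbove
        exact ⟨b + 1, fun n hn => Nat.lt_succ_of_le (hb hn)⟩
      have hsub : (fun i => ((e i : (ℕ × ℕ) × (Euc m)).1.1 + (e i : (ℕ × ℕ) × (Euc m)).1.2 : ℕ)) ⁻¹' U ⊇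
          {i : ℕ | (e i : (ℕ × ℕ) × (Euc m)).1 ∈ {p : ℕ × ℕ | p.1 + p.2 < b}}ᶜ := by
        intro i hi
        simp only [Set.mem_compl_iff, Set.mem_setOf_eq, not_lt] at hi
        by_contra h
        exact absurd (hb _ h) (not_lt.mpr hi)
      apply Set.Finite.subset _ (Set.compl_subset_compl.mpr hsub)
      rw [compl_compl]
      apply hfinidx
      apply Set.Finite.subset (Set.finite_Iic ((b, b) : ℕ × ℕ))
      intro p hp
      simp only [Set.mem_setOf_eq] at hp
      simp only [Set.mem_Iic, Prod.le_def]
      omega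
    have hbound : ∀ i, t i / δ (v i) ≤
        1 / (((e i : (ℕ × ℕ) × (Euc m)).1.1 + (e i : (ℕ × ℕ) × (Euc m)).1.2 + 1 : ℕ) : ℝ) := by
      intro i
      set n := (e i : (ℕ × ℕ) × (Euc m)).1.1
      set k := (e i : (ℕ × ℕ) × (Euc m)).1.2
      have hδv : 0 < δ (v i) := hδpos _ (hvV i)
      have hden : (0 : ℝ) < ((n + k + 1 : ℕ) : ℝ) := by positivity
      rw [div_le_div_iff₀ hδv hden, one_mul]
      push_cast
      have ht : t i = min ε ((1/2 : ℝ) ^ n) / ((n : ℝ) + (k : ℝ) + 1) := rfl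
      rw [ht, div_mul_cancel₀ _ (by positivity : ((n : ℝ) + (k : ℝ) + 1) ≠ 0)]
      exact le_trans (min_le_right _ _) (le_trans (hvC i).1 (hgle _))
    have hnonneg : ∀ i, 0 ≤ t i / δ (v i) :=
      fun i => le_of_lt (div_pos (hrpos _) (hδpos _ (hvV i)))
    have hlim : Tendsto (fun i =>
        (1 : ℝ) / (((e i : (ℕ × ℕ) × (Euc m)).1.1 + (e i : (ℕ × ℕ) × (Euc m)).1.2 + 1 : ℕ) : ℝ))
        atTop (𝓝 0) := by
      apply tendsto_one_div_atTop_nhds_zero_nat.comp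
      exact tendsto_atTop_mono (fun i => Nat.le_succ _) hf
    exact squeeze_zero hnonneg hbound hlim
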